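/- Integral convolution decay lemma: Let γ₁, γ₂ be positive real numbers with either γ₁, γ₂ ≠ 1, or γ₁ = 1 < γ₂. Then there exists a constant C > 0 (depending on γ₁, γ₂) such that ∫₀ᵗ (1 + t − s)^{−γ₁} (1 + s)^{−γ₂} ds ≤ C (1 + t)^{−min{γ₁ + γ₂ − 1, γ₁, γ₂}} for all t ≥ 0. -/

import Mathlib

open Real MeasureTheory intervalIntegral Set

private lemma aux_shift (γ a : ℝ) :
    (∫ s in (0:ℝ)..a, (1 + s) ^ (-γ)) = ∫ u in (1:ℝ)..(1+a), u ^ (-γ) := by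
  simpa using intervalIntegral.integral_comp_add_left (a := (0:ℝ)) (b := a)
    (fun u => u ^ (-γ)) 1

private lemma aux_zero_notin {a : ℝ} (ha : 0 ≤ a) : (0:ℝ) ∉ Set.uIcc 1 (1+a) := by
  intro h
  rcases Set.mem_uIcc.mp h with ⟨h1, _⟩ | ⟨h1, _⟩ <;> linarith

private lemma aux_J {γ : ℝ} (hne : γ ≠ 1) {a : ℝ} (ha : 0 ≤ a) :
    (∫ s in (0:ℝ)..a, (1 + s) ^ (-γ)) ≤ (1 / |1 - γ|) * (1 + a) ^ (max (1 - γ) 0) := by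
  rw [aux_shift, integral_rpow (Or.inr ⟨by intro h; apply hne; linarith [neg_eq_iff_eq_neg.mp h], aux_zero_notin ha⟩)]
  have hx : (0:ℝ) ≤ (1+a) ^ (-γ+1) := rpow_nonneg (by linarith) _
  rw [one_rpow]
  rcases lt_or_gt_of_ne hne with hlt | hgt
  · rw [abs_of_pos (by linarith), max_eq_left (by linarith)]
    have h1 : (1:ℝ) ≤ 1 + a := by linarith
    have : ((1+a) ^ (-γ+1) - 1) / (-γ + 1) ≤ (1+a) ^ (1-γ) / (1-γ) := by
      have : (-γ+1 : ℝ) = 1 - γ := by ring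
      rw [this]
      apply div_le_div_of_nonneg_right ?_ (by linarith) |>.trans_eq rfl
      · linarith
    calc ((1+a) ^ (-γ+1) - 1) / (-γ + 1) ≤ (1+a) ^ (1-γ) / (1-γ) := this
      _ = 1 / (1-γ) * (1+a) ^ (1-γ) := by ring
  · rw [abs_of_neg (by linarith), max_eq_right (by linarith), rpow_zero, mul_one]
    have heq : ((1+a) ^ (-γ+1) - 1) / (-γ + 1) = (1 - (1+a) ^ (-γ+1)) / (γ - 1) := by
      rw [div_eq_div_iff (by intro h; apply hne; linarith) (by intro h; apply hne; linarith)]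
      ring
    rw [heq, neg_sub]
    apply div_le_div_of_nonneg_right ?_ (by linarith) |>.trans_eq (by rw [one_div])
    linarith

private lemma aux_J1 {a : ℝ} (ha : 0 ≤ a) :
    (∫ s in (0:ℝ)..a, (1 + s) ^ (-(1:ℝ))) = Real.log (1 + a) := by
  rw [aux_shift]
  have : ∀ u : ℝ, u ^ (-(1:ℝ)) = u⁻¹ := fun u => Real.rpow_neg_one u
  simp_rw [this]
  rw [integral_inv (aux_zero_notin ha), div_one]

private lemma aux_mem_bounds {t a b : ℝ} (ha : a ∈ Set.Icc 0 t) (hb : b ∈ Set.Icc 0 t)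
    {s : ℝ} (hs : s ∈ Set.uIcc a b) : 0 ≤ s ∧ s ≤ t := by
  rcases Set.mem_uIcc.mp hs with ⟨h1, h2⟩ | ⟨h1, h2⟩ <;>
    exact ⟨by linarith [ha.1, hb.1], by linarith [ha.2, hb.2]⟩

private lemma aux_int_one {γ t a b : ℝ} (ha : a ∈ Set.Icc 0 t) (hb : b ∈ Set.Icc 0 t) :
    IntervalIntegrable (fun s => (1 + s) ^ (-γ)) volume a b := by
  apply ContinuousOn.intervalIntegrable
  apply ContinuousOn.rpow_const ((continuous_const.add continuous_id).continuousOn)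
  intro s hs
  exact Or.inl (by have := (aux_mem_bounds ha hb hs).1; show (1:ℝ) + s ≠ 0; intro h; linarith)

private lemma aux_int_two {γ t a b : ℝ} (ha : a ∈ Set.Icc 0 t) (hb : b ∈ Set.Icc 0 t) :
    IntervalIntegrable (fun s => (1 + t - s) ^ (-γ)) volume a b := by
  apply ContinuousOn.intervalIntegrable
  apply ContinuousOn.rpow_const ((continuous_const.sub continuous_id).continuousOn)
  intro s hs
  have := (aux_mem_bounds ha hb hs).2
  exact Or.inl (by intro h; change 1 + t - s = 0 at h; linarith)

private lemma aux_int_mul {γ₁ γ₂ t a b : ℝ} (ha : a ∈ Set.Icc 0 t) (hb : b ∈ Set.Icc 0 t) :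
    IntervalIntegrable (fun s => (1 + t - s) ^ (-γ₁) * (1 + s) ^ (-γ₂)) volume a b := by
  apply ContinuousOn.intervalIntegrable
  apply ContinuousOn.mul
  · apply ContinuousOn.rpow_const ((continuous_const.sub continuous_id).continuousOn)
    intro s hs
    have := (aux_mem_bounds ha hb hs).2
    exact Or.inl (by intro h; change 1 + t - s = 0 at h; linarith)
  · apply ContinuousOn.rpow_const ((continuous_const.add continuous_id).continuousOn)
    intro s hs
    exact Or.inl (by have := (aux_mem_bounds ha hb hs).1; show (1:ℝ) + s ≠ 0; intro h; linarith)

/-- Integral convolution decay lemma: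
∫₀ᵗ (1+t−s)^{−γ₁}(1+s)^{−γ₂} ds ≤ C (1+t)^{−min{γ₁+γ₂−1, γ₁, γ₂}}. -/
theorem integral_convolution_decay
    (γ₁ γ₂ : ℝ) (h₁ : 0 < γ₁) (h₂ : 0 < γ₂)
    (hcase : (γ₁ ≠ 1 ∧ γ₂ ≠ 1) ∨ (γ₁ = 1 ∧ 1 < γ₂)) :
    ∃ C > (0 : ℝ), ∀ t ≥ (0 : ℝ),
      (∫ s in (0 : ℝ)..t, (1 + t - s) ^ (-γ₁) * (1 + s) ^ (-γ₂))
        ≤ C * (1 + t) ^ (-(min (γ₁ + γ₂ - 1) (min γ₁ γ₂))) := by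
  set m := min (γ₁ + γ₂ - 1) (min γ₁ γ₂) with hm
  have hmle1 : m ≤ γ₁ + γ₂ - 1 := min_le_left _ _
  have hmle2 : m ≤ γ₁ := le_trans (min_le_right _ _) (min_le_left _ _)
  have hmle3 : m ≤ γ₂ := le_trans (min_le_right _ _) (min_le_right _ _)
  have hγ₂ne : γ₂ ≠ 1 := by
    rcases hcase with ⟨_, h⟩ | ⟨_, h⟩
    · exact h
    · exact h.ne'
  -- bound for the γ₁ integral
  have key1 : ∃ c > (0:ℝ), ∃ e, 0 ≤ e ∧ e - γ₂ ≤ -m ∧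
      ∀ a, 0 ≤ a → (∫ s in (0:ℝ)..a, (1+s)^(-γ₁)) ≤ c * (1+a) ^ e := by
    rcases hcase with ⟨hn1, _⟩ | ⟨heq1, hgt⟩
    · refine ⟨1/|1-γ₁|, (by simp [abs_pos, sub_ne_zero]; exact fun h => hn1 h.symm : (0:ℝ) < 1/|1-γ₁|), max (1-γ₁) 0, le_max_right _ _, ?_, fun a ha => aux_J hn1 ha⟩
      rcases max_cases (1-γ₁) 0 with ⟨hmax, _⟩ | ⟨hmax, _⟩ <;> rw [hmax] <;> linarith
    · subst heq1
      refine ⟨1/(γ₂-1), div_pos one_pos (by linarith), γ₂-1, by linarith, by linarith, fun a ha => ?_⟩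
      rw [aux_J1 ha]
      calc Real.log (1+a) ≤ (1+a)^(γ₂-1)/(γ₂-1) :=
            Real.log_le_rpow_div (by linarith) (by linarith)
        _ = 1/(γ₂-1) * (1+a)^(γ₂-1) := (one_div_mul_eq_div _ _).symm
  -- bound for the γ₂ integral
  have key2 : ∃ c > (0:ℝ), ∃ e, 0 ≤ e ∧ e - γ₁ ≤ -m ∧
      ∀ a, 0 ≤ a → (∫ s in (0:ℝ)..a, (1+s)^(-γ₂)) ≤ c * (1+a) ^ e := by
    refine ⟨1/|1-γ₂|, (by simp [abs_pos, sub_ne_zero]; exact fun h => hγ₂ne h.symm : (0:ℝ) < 1/|1-γ₂|), max (1-γ₂) 0, le_max_right _ _, ?_, fun a ha => aux_J hγ₂ne ha⟩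
    rcases max_cases (1-γ₂) 0 with ⟨hmax, _⟩ | ⟨hmax, _⟩ <;> rw [hmax] <;> linarith
  obtain ⟨c₁, hc₁, e₁, he₁0, he₁m, hJ₁⟩ := key1
  obtain ⟨c₂, hc₂, e₂, he₂0, he₂m, hJ₂⟩ := key2
  refine ⟨2^γ₁ * c₂ + 2^γ₂ * c₁, by positivity, fun t ht => ?_⟩
  have h0t : (0:ℝ) ∈ Set.Icc 0 t := ⟨le_refl _, ht⟩
  have hht : t/2 ∈ Set.Icc 0 t := ⟨by linarith, by linarith⟩
  have htt : t ∈ Set.Icc 0 t := ⟨ht, le_refl _⟩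
  have ht2 : (0:ℝ) ≤ t/2 := by linarith
  have hb : (0:ℝ) < (1+t)/2 := by linarith
  have h1t : (0:ℝ) < 1 + t := by linarith
  have hhalf : ∀ γ : ℝ, ((1+t)/2) ^ (-γ) = 2^γ * (1+t)^(-γ) := by
    intro γ
    rw [div_rpow (by linarith) (by norm_num), Real.rpow_neg (by norm_num : (0:ℝ) ≤ 2),
      div_eq_mul_inv, inv_inv, mul_comm]
  -- split the integral
  rw [← integral_add_adjacent_intervals (aux_int_mul h0t hht) (aux_int_mul hht htt)]
  -- first piece
  have hp1 : (∫ s in (0:ℝ)..(t/2), (1+t-s)^(-γ₁) * (1+s)^(-γ₂))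
      ≤ 2^γ₁ * c₂ * (1+t)^(-m) := by
    have step1 : (∫ s in (0:ℝ)..(t/2), (1+t-s)^(-γ₁) * (1+s)^(-γ₂))
        ≤ ((1+t)/2)^(-γ₁) * ∫ s in (0:ℝ)..(t/2), (1+s)^(-γ₂) := by
      rw [← intervalIntegral.integral_const_mul]
      apply integral_mono_on ht2 (aux_int_mul h0t hht)
        ((aux_int_one h0t hht).const_mul _)
      intro s hs
      apply mul_le_mul_of_nonneg_right ?_ (rpow_nonneg (by linarith [hs.1]) _)
      exact Real.rpow_le_rpow_of_nonpos hb (by linarith [hs.2]) (by linarith)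
    calc (∫ s in (0:ℝ)..(t/2), (1+t-s)^(-γ₁) * (1+s)^(-γ₂))
        ≤ ((1+t)/2)^(-γ₁) * ∫ s in (0:ℝ)..(t/2), (1+s)^(-γ₂) := step1
      _ ≤ ((1+t)/2)^(-γ₁) * (c₂ * (1+t)^e₂) := by
          apply mul_le_mul_of_nonneg_left ?_ (rpow_nonneg hb.le _)
          calc (∫ s in (0:ℝ)..(t/2), (1+s)^(-γ₂)) ≤ c₂ * (1+t/2)^e₂ := hJ₂ _ ht2
            _ ≤ c₂ * (1+t)^e₂ := by
                apply mul_le_mul_of_nonneg_left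
                  (Real.rpow_le_rpow (by linarith) (by linarith) he₂0) hc₂.le
      _ = 2^γ₁ * c₂ * ((1+t)^(-γ₁) * (1+t)^e₂) := by rw [hhalf]; ring
      _ = 2^γ₁ * c₂ * (1+t)^(-γ₁ + e₂) := by rw [← Real.rpow_add h1t]
      _ ≤ 2^γ₁ * c₂ * (1+t)^(-m) := by
          apply mul_le_mul_of_nonneg_left
            (Real.rpow_le_rpow_of_exponent_le (by linarith) (by linarith)) (by positivity)
  -- second piece
  have hp2 : (∫ s in (t/2)..t, (1+t-s)^(-γ₁) * (1+s)^(-γ₂))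
      ≤ 2^γ₂ * c₁ * (1+t)^(-m) := by
    have heqint : (∫ s in (t/2)..t, (1+t-s)^(-γ₁)) = ∫ u in (0:ℝ)..(t/2), (1+u)^(-γ₁) := by
      have h := intervalIntegral.integral_comp_sub_left (a := t/2) (b := t)
        (fun u => (1+u)^(-γ₁)) t
      simp only [sub_self, sub_half] at h
      rw [← h]
      congr 1
      funext s
      ring_nf
    have step1 : (∫ s in (t/2)..t, (1+t-s)^(-γ₁) * (1+s)^(-γ₂))
        ≤ ((1+t)/2)^(-γ₂) * ∫ s in (0:ℝ)..(t/2), (1+s)^(-γ₁) := by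
      rw [← heqint, ← intervalIntegral.integral_const_mul]
      apply integral_mono_on (by linarith) (aux_int_mul hht htt)
        ((aux_int_two hht htt).const_mul _)
      intro s hs
      rw [mul_comm (((1+t)/2)^(-γ₂)) _]
      apply mul_le_mul_of_nonneg_left ?_ (rpow_nonneg (by linarith [hs.2]) _)
      exact Real.rpow_le_rpow_of_nonpos hb (by linarith [hs.1]) (by linarith)
    calc (∫ s in (t/2)..t, (1+t-s)^(-γ₁) * (1+s)^(-γ₂))
        ≤ ((1+t)/2)^(-γ₂) * ∫ s in (0:ℝ)..(t/2), (1+s)^(-γ₁) := step1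
      _ ≤ ((1+t)/2)^(-γ₂) * (c₁ * (1+t)^e₁) := by
          apply mul_le_mul_of_nonneg_left ?_ (rpow_nonneg hb.le _)
          calc (∫ s in (0:ℝ)..(t/2), (1+s)^(-γ₁)) ≤ c₁ * (1+t/2)^e₁ := hJ₁ _ ht2
            _ ≤ c₁ * (1+t)^e₁ := by
                apply mul_le_mul_of_nonneg_left
                  (Real.rpow_le_rpow (by linarith) (by linarith) he₁0) hc₁.le
      _ = 2^γ₂ * c₁ * ((1+t)^(-γ₂) * (1+t)^e₁) := by rw [hhalf]; ring
      _ = 2^γ₂ * c₁ * (1+t)^(-γ₂ + e₁) := by rw [← Real.rpow_add h1t]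
      _ ≤ 2^γ₂ * c₁ * (1+t)^(-m) := by
          apply mul_le_mul_of_nonneg_left
            (Real.rpow_le_rpow_of_exponent_le (by linarith) (by linarith)) (by positivity)
  calc (∫ s in (0:ℝ)..(t/2), (1+t-s)^(-γ₁) * (1+s)^(-γ₂))
        + ∫ s in (t/2)..t, (1+t-s)^(-γ₁) * (1+s)^(-γ₂)
      ≤ 2^γ₁ * c₂ * (1+t)^(-m) + 2^γ₂ * c₁ * (1+t)^(-m) := add_le_add hp1 hp2
    _ = (2^γ₁ * c₂ + 2^γ₂ * c₁) * (1+t)^(-m) := by ring
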